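/- If B is a minimal k-blocking set in PG(n,q) and there exist p^N − p^{N−1} + 1 points R_i of B (where N = hk, q = p^h) such that every line through R_i is either tangent to B or entirely contained in B, then B is a k-dimensional subspace of PG(n,q). -/
import Mathlib


open scoped Classical

noncomputable section

namespace Stmt14Aux

open Module Submodule

variable {K V : Type*} [Field K] [AddCommGroup V] [Module K V]

/-- The vector `x` is nonzero and the corresponding projective point lies in `B`. -/
def PtMem (B : Set (Projectivization K V)) (x : V) : Prop :=
  ∃ hx : x ≠ 0, Projectivization.mk K x hx ∈ B

/-- `v` is a nonzero vector whose projective point is a "vertex" of `B`: every line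
through it and a point of `B` is fully contained in `B`. -/
def IsVertexVec (B : Set (Projectivization K V)) (v : V) : Prop :=
  v ≠ 0 ∧ ∀ w : V, PtMem B w → ∀ x ∈ Submodule.span K ({v, w} : Set V), x ≠ 0 → PtMem B x

lemma IsVertexVec.ptMem {B : Set (Projectivization K V)} {v w : V}
    (hv : IsVertexVec B v) (hw : PtMem B w) : PtMem B v :=
  hv.2 w hw v (Submodule.mem_span_pair.2 ⟨1, 0, by simp⟩) hv.1

lemma IsVertexVec.smul {B : Set (Projectivization K V)} {v : V} (hv : IsVertexVec B v)
    {c : K} (hc : c ≠ 0) : IsVertexVec B (c • v) := by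
  refine ⟨smul_ne_zero hc hv.1, ?_⟩
  intro w hw x hx hx0
  refine hv.2 w hw x ?_ hx0
  rw [Submodule.mem_span_pair] at hx ⊢
  obtain ⟨a, b, rfl⟩ := hx
  exact ⟨a * c, b, by rw [mul_smul]⟩

lemma IsVertexVec.add {B : Set (Projectivization K V)} {v₁ v₂ : V}
    (h1 : IsVertexVec B v₁) (h2 : IsVertexVec B v₂) (hne : v₁ + v₂ ≠ 0) :
    IsVertexVec B (v₁ + v₂) := by
  refine ⟨hne, ?_⟩
  intro w hw x hx hx0
  rw [Submodule.mem_span_pair] at hx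
  obtain ⟨a, b, rfl⟩ := hx
  by_cases hy : a • v₂ + b • w = 0
  · have hx' : a • (v₁ + v₂) + b • w = a • v₁ := by
      rw [smul_add, add_assoc, hy, add_zero]
    rw [hx'] at hx0 ⊢
    exact h1.2 w hw _ (Submodule.mem_span_pair.2 ⟨a, 0, by simp⟩) hx0
  · have hyB : PtMem B (a • v₂ + b • w) :=
      h2.2 w hw _ (Submodule.mem_span_pair.2 ⟨a, b, rfl⟩) hy
    have hx' : a • (v₁ + v₂) + b • w = a • v₁ + (1 : K) • (a • v₂ + b • w) := by
      rw [smul_add, one_smul]; abel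
    rw [hx'] at hx0 ⊢
    exact h1.2 _ hyB _ (Submodule.mem_span_pair.2 ⟨a, 1, rfl⟩) hx0

/-- The set of vertex vectors (together with `0`) forms a submodule. -/
def vertexSubmodule (B : Set (Projectivization K V)) : Submodule K V where
  carrier := {v | v = 0 ∨ IsVertexVec B v}
  zero_mem' := Or.inl rfl
  add_mem' := by
    rintro a b (rfl | ha) (rfl | hb)
    · simp
    · simpa using Or.inr hb
    · simpa using Or.inr ha
    · by_cases hab : a + b = 0
      · exact Or.inl hab
      · exact Or.inr (ha.add hb hab)
  smul_mem' := by
    rintro c a (rfl | ha)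
    · simp
    · by_cases hc : c = 0
      · subst hc; simp
      · exact Or.inr (ha.smul hc)

lemma mem_vertexSubmodule_iff {B : Set (Projectivization K V)} {v : V} :
    v ∈ vertexSubmodule B ↔ v = 0 ∨ IsVertexVec B v := Iff.rfl

lemma finrank_sup_span_singleton [FiniteDimensional K V] (W : Submodule K V) {x : V}
    (hx : x ∉ W) : finrank K ↥(W ⊔ K ∙ x) = finrank K ↥W + 1 := by
  have hx0 : x ≠ 0 := fun h => hx (h ▸ W.zero_mem)
  have hinf : W ⊓ (K ∙ x) = ⊥ := by
    rw [eq_bot_iff]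
    rintro y hy
    rw [Submodule.mem_inf] at hy
    obtain ⟨c, rfl⟩ := Submodule.mem_span_singleton.1 hy.2
    rcases eq_or_ne c 0 with rfl | hc
    · simp
    · exact absurd (by simpa [smul_smul, hc] using W.smul_mem c⁻¹ hy.1) hx
  have h := Submodule.finrank_sup_add_finrank_inf_eq W (K ∙ x)
  rw [hinf, finrank_bot, finrank_span_singleton hx0] at h
  omega

lemma exists_le_finrank_eq [FiniteDimensional K V] (U : Submodule K V) (m : ℕ)
    (hm : m ≤ finrank K ↥U) : ∃ W ≤ U, finrank K ↥W = m := by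
  induction m with
  | zero => exact ⟨⊥, bot_le, finrank_bot K V⟩
  | succ m ih =>
    obtain ⟨W, hWU, hWrank⟩ := ih (le_of_lt (Nat.lt_of_succ_le hm))
    have hlt : W < U := lt_of_le_of_ne hWU (by rintro rfl; omega)
    obtain ⟨x, hxU, hxW⟩ := SetLike.exists_of_lt hlt
    refine ⟨W ⊔ K ∙ x, sup_le hWU ((Submodule.span_singleton_le_iff_mem x U).2 hxU), ?_⟩
    rw [finrank_sup_span_singleton W hxW, hWrank]

/-- A point of `B` all of whose lines are tangent or contained in `B` gives a vertex. -/
lemma isVertexVec_of_lines [FiniteDimensional K V] (B : Finset (Projectivization K V))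
    (P : Projectivization K V) (hPR : P ∈ B)
    (hlines : ∀ L : Submodule K V,
      Module.finrank K L = 2 → P.submodule ≤ L →
        ((B.filter fun Q => Q.submodule ≤ L).card = 1 ∨
          ∀ Q : Projectivization K V, Q.submodule ≤ L → Q ∈ B)) :
    IsVertexVec (B : Set (Projectivization K V)) P.rep := by
  refine ⟨P.rep_nonzero, ?_⟩
  intro w hw x hx hx0
  obtain ⟨hw0, hwB⟩ := hw
  by_cases hwspan : w ∈ (K ∙ P.rep)
  · have hxle : x ∈ (K ∙ P.rep) := by
      have : Submodule.span K ({P.rep, w} : Set V) ≤ K ∙ P.rep := by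
        rw [Submodule.span_le]
        rintro y (rfl | rfl)
        · exact Submodule.mem_span_singleton_self _
        · exact hwspan
      exact this hx
    obtain ⟨c, rfl⟩ := Submodule.mem_span_singleton.1 hxle
    refine ⟨hx0, ?_⟩
    have : Projectivization.mk K (c • P.rep) hx0 = P := by
      conv_rhs => rw [← P.mk_rep]
      exact (Projectivization.mk_eq_mk_iff' K _ _ hx0 P.rep_nonzero).2 ⟨c, rfl⟩
    rw [this]; exact hPR
  · set L := Submodule.span K ({P.rep, w} : Set V) with hL
    have hLsup : L = (K ∙ P.rep) ⊔ (K ∙ w) := by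
      rw [hL, show ({P.rep, w} : Set V) = insert P.rep {w} from rfl, Submodule.span_insert]
    have hrank : Module.finrank K L = 2 := by
      rw [hLsup, finrank_sup_span_singleton _ hwspan, finrank_span_singleton P.rep_nonzero]
    have hPle : P.submodule ≤ L := by
      rw [Projectivization.submodule_eq, hLsup]; exact le_sup_left
    rcases hlines L hrank hPle with hcard | hall
    · exfalso
      have hPmem : P ∈ B.filter fun Q => Q.submodule ≤ L := by
        rw [Finset.mem_filter]; exact ⟨hPR, hPle⟩
      have hwle : (Projectivization.mk K w hw0).submodule ≤ L := by
        rw [Projectivization.submodule_mk, hLsup]; exact le_sup_right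
      have hwmem : Projectivization.mk K w hw0 ∈ B.filter fun Q => Q.submodule ≤ L := by
        rw [Finset.mem_filter]; exact ⟨hwB, hwle⟩
      have hne : P ≠ Projectivization.mk K w hw0 := by
        intro he
        apply hwspan
        have : w ∈ (Projectivization.mk K w hw0).submodule := by
          rw [Projectivization.submodule_mk]; exact Submodule.mem_span_singleton_self _
        rwa [← he, Projectivization.submodule_eq] at this
      have : 1 < (B.filter fun Q => Q.submodule ≤ L).card :=
        Finset.one_lt_card.2 ⟨P, hPmem, _, hwmem, hne⟩
      omega
    · refine ⟨hx0, hall _ ?_⟩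
      rw [Projectivization.submodule_mk]
      exact (Submodule.span_singleton_le_iff_mem x L).2 hx

end Stmt14Aux

/-- The point set of `PG(n,q)`, `q = p^h`: the projectivization of `F_q^{n+1}`. -/
abbrev PGPoint (p h n : ℕ) [Fact p.Prime] :=
  Projectivization (GaloisField p h) (Fin (n+1) → GaloisField p h)

noncomputable instance (p h n : ℕ) [Fact p.Prime] : Fintype (PGPoint p h n) :=
  @Fintype.ofFinite _ (Quotient.finite _)

/-- A finite set of points of `PG(n,q)` is a `k`-blocking set if it meets every
`(n-k)`-dimensional subspace. -/
def IsKBlockingSet (p h n k : ℕ) [Fact p.Prime] (B : Finset (PGPoint p h n)) : Prop :=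
  ∀ S : Submodule (GaloisField p h) (Fin (n+1) → GaloisField p h),
    Module.finrank (GaloisField p h) S = n - k + 1 → ∃ P ∈ B, P.submodule ≤ S

/-- A minimal `k`-blocking set: no proper subset is a `k`-blocking set. -/
def IsMinimalKBlockingSet (p h n k : ℕ) [Fact p.Prime]
    (B : Finset (PGPoint p h n)) : Prop :=
  IsKBlockingSet p h n k B ∧ ∀ B' ⊂ B, ¬ IsKBlockingSet p h n k B'

/-- if a minimal `k`-blocking set `B` of `PG(n,q)`, `q = p^h`, contains
`p^N - p^{N-1} + 1` points (`N = hk`) such that every line through any of them is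
either tangent to `B` or entirely contained in `B`, then `B` is a `k`-space. -/
theorem stmt14 (p h n k : ℕ) [Fact p.Prime] (hh : 0 < h) (hk1 : 1 ≤ k) (hkn : k ≤ n)
    (B : Finset (PGPoint p h n)) (hmin : IsMinimalKBlockingSet p h n k B)
    (R : Finset (PGPoint p h n)) (hRB : R ⊆ B)
    (hRcard : p ^ (h * k) - p ^ (h * k - 1) + 1 ≤ R.card)
    (hlines : ∀ P ∈ R, ∀ L : Submodule (GaloisField p h) (Fin (n+1) → GaloisField p h),
      Module.finrank (GaloisField p h) L = 2 → P.submodule ≤ L →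
        ((B.filter fun Q => Q.submodule ≤ L).card = 1 ∨
          ∀ Q : PGPoint p h n, Q.submodule ≤ L → Q ∈ B)) :
    ∃ W : Submodule (GaloisField p h) (Fin (n+1) → GaloisField p h),
      Module.finrank (GaloisField p h) W = k + 1 ∧
      ∀ P : PGPoint p h n, P ∈ B ↔ P.submodule ≤ W := by
  classical
  have hp2 : 2 ≤ p := (Fact.out : p.Prime).two_le
  have finrankV :
      Module.finrank (GaloisField p h) (Fin (n+1) → GaloisField p h) = n + 1 :=
    Module.finrank_fin_fun (GaloisField p h)
  -- B is nonempty
  obtain ⟨S0, -, hS0⟩ := Stmt14Aux.exists_le_finrank_eq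
    (⊤ : Submodule (GaloisField p h) (Fin (n+1) → GaloisField p h)) (n - k + 1)
    (by rw [finrank_top, finrankV]; omega)
  obtain ⟨P0, hP0B, -⟩ := hmin.1 S0 hS0
  have hP0mem : Stmt14Aux.PtMem (B : Set (PGPoint p h n)) P0.rep :=
    ⟨P0.rep_nonzero, by rw [P0.mk_rep]; exact hP0B⟩
  -- every point of R is a vertex
  have hvert : ∀ P ∈ R, Stmt14Aux.IsVertexVec (B : Set (PGPoint p h n)) P.rep :=
    fun P hPR => Stmt14Aux.isVertexVec_of_lines B P (hRB hPR) (hlines P hPR)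
  -- the span of R consists of vertices
  set W0 : Submodule (GaloisField p h) (Fin (n+1) → GaloisField p h) :=
    Submodule.span (GaloisField p h)
      (↑(R.image Projectivization.rep) : Set (Fin (n+1) → GaloisField p h)) with hW0
  have hW0vert : ∀ x ∈ W0, x ≠ 0 →
      Stmt14Aux.IsVertexVec (B : Set (PGPoint p h n)) x := by
    have hle : W0 ≤ Stmt14Aux.vertexSubmodule (B : Set (PGPoint p h n)) := by
      rw [hW0, Submodule.span_le]
      intro v hv
      rw [Finset.coe_image, Set.mem_image] at hv
      obtain ⟨P, hP, rfl⟩ := hv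
      exact Or.inr (hvert P hP)
    intro x hx hx0
    rcases hle hx with h | h
    · exact absurd h hx0
    · exact h
  -- membership of vertices in B
  have hW0B : ∀ x ∈ W0, ∀ hx : x ≠ 0, Projectivization.mk (GaloisField p h) x hx ∈ B := by
    intro x hx hx0
    obtain ⟨hx0', hmem⟩ := (hW0vert x hx hx0).ptMem hP0mem
    exact hmem
  -- rank of W0 is at least k
  have hrankW0 : k ≤ Module.finrank (GaloisField p h) ↥W0 := by
    by_contra hlt
    push_neg at hlt
    haveI : Fintype (GaloisField p h) := Fintype.ofFinite _
    haveI : Fintype ↥W0 := Fintype.ofFinite _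
    have hrepmem : ∀ P ∈ R, Projectivization.rep P ∈ W0 := by
      intro P hP
      apply Submodule.subset_span
      rw [Finset.coe_image]
      exact Set.mem_image_of_mem _ hP
    have hcardle : R.card ≤ Fintype.card ↥W0 := by
      rw [← Fintype.card_coe R]
      refine Fintype.card_le_of_injective
        (fun P => (⟨P.1.rep, hrepmem P.1 P.2⟩ : ↥W0)) ?_
      rintro ⟨a, ha⟩ ⟨b, hb⟩ hab
      injection hab with h1
      exact Subtype.ext (Quotient.out_injective (Subtype.val_injective h1))
    have hcardK : Fintype.card (GaloisField p h) = p ^ h := by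
      rw [← Nat.card_eq_fintype_card, GaloisField.card p h hh.ne']
    have hcardW0 : Fintype.card ↥W0 =
        (p ^ h) ^ Module.finrank (GaloisField p h) ↥W0 := by
      rw [← hcardK]
      exact Module.card_eq_pow_finrank
    have hbound : (p ^ h) ^ Module.finrank (GaloisField p h) ↥W0 ≤ p ^ (h * k - 1) := by
      rw [← pow_mul]
      apply Nat.pow_le_pow_right (by omega)
      have h1 : h * Module.finrank (GaloisField p h) ↥W0 ≤ h * (k - 1) :=
        Nat.mul_le_mul_left h (by omega)
      have h2 : h * (k - 1) + h = h * k := by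
        rw [← Nat.mul_succ]
        congr 1
        omega
      omega
    have hNbig : p ^ (h * k - 1) + 1 ≤ p ^ (h * k) - p ^ (h * k - 1) + 1 := by
      have hhk : 0 < h * k := Nat.mul_pos hh (by omega)
      have he : p ^ (h * k) = p ^ (h * k - 1) * p := by
        rw [← pow_succ]
        congr 1
        omega
      have h3 : p ^ (h * k - 1) * 2 ≤ p ^ (h * k - 1) * p :=
        Nat.mul_le_mul_left _ hp2
      omega
    omega
  -- construct a (k+1)-rank subspace all of whose points are in B
  have hWex : ∃ W : Submodule (GaloisField p h) (Fin (n+1) → GaloisField p h),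
      Module.finrank (GaloisField p h) ↥W = k + 1 ∧
      ∀ x ∈ W, ∀ hx : x ≠ 0, Projectivization.mk (GaloisField p h) x hx ∈ B := by
    by_cases hbig : k + 1 ≤ Module.finrank (GaloisField p h) ↥W0
    · obtain ⟨W, hWle, hWrank⟩ := Stmt14Aux.exists_le_finrank_eq W0 (k+1) hbig
      exact ⟨W, hWrank, fun x hx hx0 => hW0B x (hWle hx) hx0⟩
    · have hrkW0 : Module.finrank (GaloisField p h) ↥W0 = k := by omega
      obtain ⟨S, hScompl⟩ := Submodule.exists_isCompl W0
      have hSrank : Module.finrank (GaloisField p h) ↥S = n - k + 1 := by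
        have := Submodule.finrank_add_eq_of_isCompl hScompl
        rw [hrkW0, finrankV] at this
        omega
      obtain ⟨Q, hQB, hQS⟩ := hmin.1 S hSrank
      have hQrepS : Q.rep ∈ S := by
        have : Q.rep ∈ Q.submodule := by
          rw [Projectivization.submodule_eq]
          exact Submodule.mem_span_singleton_self _
        exact hQS this
      have hQnot : Q.rep ∉ W0 := by
        intro hmem
        have : Q.rep ∈ W0 ⊓ S := Submodule.mem_inf.2 ⟨hmem, hQrepS⟩
        rw [hScompl.inf_eq_bot] at this
        exact Q.rep_nonzero this
      refine ⟨W0 ⊔ (GaloisField p h ∙ Q.rep), ?_, ?_⟩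
      · rw [Stmt14Aux.finrank_sup_span_singleton W0 hQnot, hrkW0]
      · intro x hx hx0
        obtain ⟨w, hw, y, hy, rfl⟩ := Submodule.mem_sup.1 hx
        obtain ⟨c, rfl⟩ := Submodule.mem_span_singleton.1 hy
        by_cases hw0 : w = 0
        · subst hw0
          have : Projectivization.mk (GaloisField p h) (0 + c • Q.rep) hx0 = Q := by
            conv_rhs => rw [← Q.mk_rep]
            exact (Projectivization.mk_eq_mk_iff' (GaloisField p h) _ _ hx0
              Q.rep_nonzero).2 ⟨c, by rw [zero_add]⟩
          rw [this]; exact hQB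
        · have hQmem : Stmt14Aux.PtMem (B : Set (PGPoint p h n)) Q.rep :=
            ⟨Q.rep_nonzero, by rw [Q.mk_rep]; exact hQB⟩
          have hvw := hW0vert w hw hw0
          obtain ⟨hx0', hmem⟩ := hvw.2 Q.rep hQmem (w + c • Q.rep)
            (Submodule.mem_span_pair.2 ⟨1, c, by rw [one_smul]⟩) hx0
          exact hmem
  obtain ⟨W, hWrank, hWB⟩ := hWex
  -- the filtered set is a blocking set
  set B' : Finset (PGPoint p h n) := B.filter (fun P => P.submodule ≤ W) with hB'
  have hB'sub : B' ⊆ B := Finset.filter_subset _ _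
  have hB'block : IsKBlockingSet p h n k B' := by
    intro S hS
    have hge : 1 ≤ Module.finrank (GaloisField p h) ↥(W ⊓ S) := by
      have h1 := Submodule.finrank_sup_add_finrank_inf_eq W S
      have h2 := Submodule.finrank_le (W ⊔ S)
      rw [hWrank, hS] at h1
      omega
    have hne : W ⊓ S ≠ ⊥ := by
      intro hbot
      rw [hbot, finrank_bot] at hge
      omega
    obtain ⟨x, hxmem, hx0⟩ := (Submodule.ne_bot_iff _).1 hne
    rw [Submodule.mem_inf] at hxmem
    refine ⟨Projectivization.mk (GaloisField p h) x hx0, ?_, ?_⟩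
    · rw [hB', Finset.mem_filter]
      refine ⟨hWB x hxmem.1 hx0, ?_⟩
      rw [Projectivization.submodule_mk]
      exact (Submodule.span_singleton_le_iff_mem x W).2 hxmem.1
    · rw [Projectivization.submodule_mk]
      exact (Submodule.span_singleton_le_iff_mem x S).2 hxmem.2
  have hBeq : B' = B := by
    by_contra hne
    exact hmin.2 B' (lt_of_le_of_ne hB'sub hne) hB'block
  refine ⟨W, hWrank, fun P => ⟨?_, ?_⟩⟩
  · intro hPB
    rw [← hBeq, hB', Finset.mem_filter] at hPB
    exact hPB.2
  · intro hle
    have hrep : P.rep ∈ W := by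
      apply hle
      rw [Projectivization.submodule_eq]
      exact Submodule.mem_span_singleton_self _
    have := hWB P.rep hrep P.rep_nonzero
    rwa [P.mk_rep] at this

end
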